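/- Let λ ∈ (0,1] and let X ⊆ ℝⁿ and U ⊆ ℝᵐ be C-sets. Then d(Q_k^λ(C), Q_k^λ(D)) ≤ d(C,D) for every k ∈ ℕ and all C-sets C, D ⊆ ℝⁿ with C ⊆ D. -/

import Mathlib

open Set Metric Pointwise

noncomputable section

abbrev Euc (n : ℕ) := EuclideanSpace ℝ (Fin n)

def IsCSet {n : ℕ} (C : Set (Euc n)) : Prop :=
  Convex ℝ C ∧ IsCompact C ∧ (0 : Euc n) ∈ interior C

def rho {n : ℕ} (ξ : Euc n) (C : Set (Euc n)) : ℝ :=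
  sSup {μ : ℝ | 0 < μ ∧ μ • ξ ∈ C}

def cdist {n : ℕ} (C D : Set (Euc n)) : ℝ :=
  ⨆ ξ : sphere (0 : Euc n) 1, |Real.log (rho ξ C) - Real.log (rho ξ D)|

def Q1 {n m : ℕ} (A : Matrix (Fin n) (Fin n) ℝ) (B : Matrix (Fin n) (Fin m) ℝ)
    (X : Set (Euc n)) (U : Set (Euc m)) (lam : ℝ) (D : Set (Euc n)) : Set (Euc n) :=
  {x ∈ X | ∃ u ∈ U, WithLp.toLp 2 (A.mulVec x + B.mulVec u) ∈ lam • D}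

def Qiter {n m : ℕ} (A : Matrix (Fin n) (Fin n) ℝ) (B : Matrix (Fin n) (Fin m) ℝ)
    (X : Set (Euc n)) (U : Set (Euc m)) (lam : ℝ) (D : Set (Euc n)) : ℕ → Set (Euc n)
  | 0 => D
  | k + 1 => Q1 A B X U lam (Qiter A B X U lam D k)

def IsContractive {n m : ℕ} (A : Matrix (Fin n) (Fin n) ℝ) (B : Matrix (Fin n) (Fin m) ℝ)
    (X : Set (Euc n)) (U : Set (Euc m)) (lam : ℝ) (C : Set (Euc n)) : Prop :=
  C ⊆ X ∧ ∀ x ∈ C, ∃ u ∈ U, WithLp.toLp 2 (A.mulVec x + B.mulVec u) ∈ lam • C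

def Cmax {n m : ℕ} (A : Matrix (Fin n) (Fin n) ℝ) (B : Matrix (Fin n) (Fin m) ℝ)
    (X : Set (Euc n)) (U : Set (Euc m)) (lam : ℝ) : Set (Euc n) :=
  ⋃₀ {C | IsContractive A B X U lam C}

def ctrb {n m : ℕ} (A : Matrix (Fin n) (Fin n) ℝ) (B : Matrix (Fin n) (Fin m) ℝ) :
    Matrix (Fin n) (Fin n × Fin m) ℝ :=
  Matrix.of fun i p => (A ^ (n - 1 - (p.1 : ℕ)) * B) i p.2

def Controllable {n m : ℕ} (A : Matrix (Fin n) (Fin n) ℝ)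
    (B : Matrix (Fin n) (Fin m) ℝ) : Prop :=
  (ctrb A B).rank = n

def enorm {ι : Type*} [Fintype ι] (v : ι → ℝ) : ℝ :=
  ‖(WithLp.equiv 2 (ι → ℝ)).symm v‖

def sigmaMax {n : ℕ} {ι : Type*} [Fintype ι] (Φ : Matrix (Fin n) ι ℝ) : ℝ :=
  ⨆ ξ : sphere (0 : EuclideanSpace ℝ ι) 1, enorm (Φ.mulVec ξ)

def sigmaMin {n : ℕ} {ι : Type*} [Fintype ι] (Φ : Matrix (Fin n) ι ℝ) : ℝ :=
  ⨅ ξ : sphere (0 : Euc n) 1, enorm (Φ.transpose.mulVec ξ)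

def alphaA {n : ℕ} (A : Matrix (Fin n) (Fin n) ℝ) : ℝ :=
  max 1 (⨆ j ∈ Finset.Icc 1 n, sigmaMax (A ^ j))

def rhoHat {n m : ℕ} (A : Matrix (Fin n) (Fin n) ℝ) (B : Matrix (Fin n) (Fin m) ℝ)
    (lam rx ru : ℝ) : ℝ :=
  lam ^ (n - 1) / alphaA A *
    min (rx / (1 + sigmaMax (ctrb A B) / sigmaMin (ctrb A B)))
        (ru * sigmaMin (ctrb A B))

end

noncomputable section Aux

lemma smul_mem_of_cvx {E : Type*} [AddCommGroup E] [Module ℝ E] {s : Set E}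
    (hs : Convex ℝ s) (h0 : (0:E) ∈ s) {x : E} (hx : x ∈ s) {t : ℝ}
    (ht0 : 0 ≤ t) (ht1 : t ≤ 1) : t • x ∈ s := by
  have := hs h0 hx (by linarith : (0:ℝ) ≤ 1 - t) ht0 (by ring)
  simpa using this

lemma bddAboveT {n : ℕ} {S : Set (Euc n)} (hS : Bornology.IsBounded S)
    {ξ : Euc n} (hξ : ‖ξ‖ = 1) : BddAbove {μ : ℝ | 0 < μ ∧ μ • ξ ∈ S} := by
  obtain ⟨R, hR⟩ := hS.subset_closedBall 0
  refine ⟨R, fun μ hμ => ?_⟩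
  have h2 := hR hμ.2
  simp only [mem_closedBall, dist_zero_right] at h2
  rwa [norm_smul, hξ, mul_one, Real.norm_eq_abs, abs_of_pos hμ.1] at h2

lemma rho_nonneg {n : ℕ} (ξ : Euc n) (S : Set (Euc n)) : 0 ≤ rho ξ S :=
  Real.sSup_nonneg (fun _ hμ => hμ.1.le)

lemma rho_mono {n : ℕ} {S S' : Set (Euc n)} (h : S ⊆ S') (hb : Bornology.IsBounded S')
    {ξ : Euc n} (hξ : ‖ξ‖ = 1) : rho ξ S ≤ rho ξ S' := by
  rcases Set.eq_empty_or_nonempty {μ : ℝ | 0 < μ ∧ μ • ξ ∈ S} with he | hne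
  · rw [rho, he, Real.sSup_empty]; exact rho_nonneg ξ S'
  · exact csSup_le_csSup (bddAboveT hb hξ) hne (fun μ hμ => ⟨hμ.1, h hμ.2⟩)

lemma rho_ge {n : ℕ} {C : Set (Euc n)} (hb : Bornology.IsBounded C) {r : ℝ}
    (hr : 0 < r) (hball : ball (0 : Euc n) r ⊆ C)
    {ξ : Euc n} (hξ : ‖ξ‖ = 1) : r / 2 ≤ rho ξ C := by
  have hmem : r / 2 ∈ {μ : ℝ | 0 < μ ∧ μ • ξ ∈ C} := by
    refine ⟨by linarith, hball ?_⟩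
    simp only [mem_ball, dist_zero_right, norm_smul, hξ, mul_one, Real.norm_eq_abs]
    rw [abs_of_pos (by linarith)]; linarith
  exact le_csSup (bddAboveT hb hξ) hmem

lemma rho_pos {n : ℕ} {C : Set (Euc n)} (hC : IsCSet C)
    {ξ : Euc n} (hξ : ‖ξ‖ = 1) : 0 < rho ξ C := by
  obtain ⟨r, hr, hball⟩ := Metric.mem_nhds_iff.mp (mem_interior_iff_mem_nhds.mp hC.2.2)
  have := rho_ge hC.2.1.isBounded hr hball hξ
  linarith

lemma rho_le {n : ℕ} {C : Set (Euc n)} {R : ℝ} (hR : C ⊆ closedBall 0 R)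
    {ξ : Euc n} (hξ : ‖ξ‖ = 1) (hRpos : 0 < R) : rho ξ C ≤ R := by
  rcases Set.eq_empty_or_nonempty {μ : ℝ | 0 < μ ∧ μ • ξ ∈ C} with he | hne
  · rw [rho, he, Real.sSup_empty]; exact hRpos.le
  · refine csSup_le hne (fun μ hμ => ?_)
    have h2 := hR hμ.2
    simp only [mem_closedBall, dist_zero_right] at h2
    rwa [norm_smul, hξ, mul_one, Real.norm_eq_abs, abs_of_pos hμ.1] at h2

lemma smul_mem_of_le_rho {n : ℕ} {C : Set (Euc n)} (hC : IsCSet C)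
    {ξ : Euc n} (hξ : ‖ξ‖ = 1) {μ : ℝ} (h0 : 0 < μ) (hle : μ ≤ rho ξ C) :
    μ • ξ ∈ C := by
  have h0C : (0 : Euc n) ∈ C := interior_subset hC.2.2
  have strict : ∀ ν : ℝ, 0 < ν → ν < rho ξ C → ν • ξ ∈ C := by
    intro ν hν hνlt
    have hne : {μ : ℝ | 0 < μ ∧ μ • ξ ∈ C}.Nonempty := by
      by_contra h
      rw [Set.not_nonempty_iff_eq_empty] at h
      rw [rho, h, Real.sSup_empty] at hνlt; linarith
    obtain ⟨ν', hν'mem, hlt⟩ := exists_lt_of_lt_csSup hne hνlt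
    have : (ν / ν') • (ν' • ξ) ∈ C :=
      smul_mem_of_cvx hC.1 h0C hν'mem.2 (div_nonneg hν.le (by linarith))
        ((div_le_one (by linarith)).mpr hlt.le)
    rwa [smul_smul, div_mul_cancel₀ _ (hν.trans hlt).ne'] at this
  have key : ∀ j : ℕ, (μ - μ / (j + 2)) • ξ ∈ C := by
    intro j
    have hj2 : (0:ℝ) < (j:ℝ) + 2 := by positivity
    have hfrac : μ / ((j:ℝ) + 2) < μ := by
      rw [div_lt_iff₀ hj2]; nlinarith
    have hfp : 0 < μ / ((j:ℝ) + 2) := by positivity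
    exact strict _ (by linarith) (by linarith)
  have htend : Filter.Tendsto (fun j : ℕ => (μ - μ / (j + 2)) • ξ) Filter.atTop
      (nhds (μ • ξ)) := by
    have h1 : Filter.Tendsto (fun j : ℕ => μ / ((j:ℝ) + 2)) Filter.atTop (nhds 0) := by
      apply Filter.Tendsto.div_atTop (tendsto_const_nhds)
      exact Filter.tendsto_atTop_add_const_right _ 2 tendsto_natCast_atTop_atTop
    have h2 : Filter.Tendsto (fun j : ℕ => μ - μ / ((j:ℝ) + 2)) Filter.atTop (nhds μ) := by
      simpa using (tendsto_const_nhds.sub h1)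
    exact h2.smul tendsto_const_nhds
  exact hC.2.1.isClosed.mem_of_tendsto htend (Filter.Eventually.of_forall key)

variable {n m : ℕ} {A : Matrix (Fin n) (Fin n) ℝ} {B : Matrix (Fin n) (Fin m) ℝ}
  {X : Set (Euc n)} {U : Set (Euc m)} {lam : ℝ}

lemma Q1_mono {C D : Set (Euc n)} (h : C ⊆ D) :
    Q1 A B X U lam C ⊆ Q1 A B X U lam D := by
  rintro x ⟨hx, u, hu, hmem⟩
  exact ⟨hx, u, hu, Set.smul_set_mono h hmem⟩

lemma Qiter_mono {C D : Set (Euc n)} (h : C ⊆ D) (k : ℕ) :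
    Qiter A B X U lam C k ⊆ Qiter A B X U lam D k := by
  induction k with
  | zero => exact h
  | succ k ih => exact Q1_mono ih

lemma Q1_scale (hXc : Convex ℝ X) (hX0 : (0:Euc n) ∈ X) (hUc : Convex ℝ U)
    (hU0 : (0:Euc m) ∈ U) {γ : ℝ} (h0 : 0 ≤ γ) (h1 : γ ≤ 1) (S : Set (Euc n)) :
    γ • Q1 A B X U lam S ⊆ Q1 A B X U lam (γ • S) := by
  rintro _ ⟨x, ⟨hx, u, hu, hmem⟩, rfl⟩
  refine ⟨smul_mem_of_cvx hXc hX0 hx h0 h1, γ • u,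
    smul_mem_of_cvx hUc hU0 hu h0 h1, ?_⟩
  have heq : WithLp.toLp 2 (A.mulVec (WithLp.ofLp (γ • x)) + B.mulVec (WithLp.ofLp (γ • u))) =
      γ • WithLp.toLp 2 (A.mulVec x + B.mulVec u) := by
    simp only [WithLp.ofLp_smul, Matrix.mulVec_smul, smul_add, WithLp.toLp_add, WithLp.toLp_smul]
  beta_reduce
  rw [heq, smul_comm lam γ S]
  exact smul_mem_smul_set hmem

lemma Qiter_scale (hXc : Convex ℝ X) (hX0 : (0:Euc n) ∈ X) (hUc : Convex ℝ U)
    (hU0 : (0:Euc m) ∈ U) {γ : ℝ} (h0 : 0 ≤ γ) (h1 : γ ≤ 1) {C D : Set (Euc n)}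
    (h : γ • D ⊆ C) (k : ℕ) :
    γ • Qiter A B X U lam D k ⊆ Qiter A B X U lam C k := by
  induction k with
  | zero => exact h
  | succ k ih => exact (Q1_scale hXc hX0 hUc hU0 h0 h1 _).trans (Q1_mono ih)

lemma Qiter_subset (C : Set (Euc n)) (k : ℕ) :
    Qiter A B X U lam C k ⊆ X ∪ C := by
  cases k with
  | zero => exact Set.subset_union_right
  | succ k => exact fun x hx => Or.inl hx.1

end Aux

theorem stmt7 {n m : ℕ} (lam : ℝ) (hlam : lam ∈ Set.Ioc (0 : ℝ) 1)
    (A : Matrix (Fin n) (Fin n) ℝ) (B : Matrix (Fin n) (Fin m) ℝ)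
    (X : Set (Euc n)) (U : Set (Euc m)) (hX : IsCSet X) (hU : IsCSet U) :
    ∀ k : ℕ, ∀ C D : Set (Euc n), IsCSet C → IsCSet D → C ⊆ D →
      cdist (Qiter A B X U lam C k) (Qiter A B X U lam D k) ≤ cdist C D := by
  intro k C D hC hD hCD
  set d := cdist C D with hd
  have hd0 : 0 ≤ d := Real.iSup_nonneg (fun ξ => abs_nonneg _)
  set γ := Real.exp (-d) with hγ
  have hγ0 : 0 < γ := Real.exp_pos _
  have hγ1 : γ ≤ 1 := Real.exp_le_one_iff.mpr (by linarith)
  -- bounds for the family defining d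
  obtain ⟨r, hr, hball⟩ := Metric.mem_nhds_iff.mp (mem_interior_iff_mem_nhds.mp hC.2.2)
  obtain ⟨R, hRsub⟩ := hD.2.1.isBounded.subset_closedBall 0
  set R' := max R 1 with hR'
  have hR'pos : (0:ℝ) < R' := lt_of_lt_of_le one_pos (le_max_right _ _)
  have hDsub : D ⊆ closedBall (0 : Euc n) R' :=
    hRsub.trans (closedBall_subset_closedBall (le_max_left _ _))
  have hbddf : BddAbove (Set.range fun ξ : sphere (0 : Euc n) 1 =>
      |Real.log (rho ξ C) - Real.log (rho ξ D)|) := by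
    refine ⟨Real.log R' - Real.log (r / 2), ?_⟩
    rintro _ ⟨ξ, rfl⟩
    show |Real.log (rho (↑ξ) C) - Real.log (rho (↑ξ) D)| ≤ Real.log R' - Real.log (r / 2)
    have hξ : ‖(ξ : Euc n)‖ = 1 := mem_sphere_zero_iff_norm.mp ξ.2
    have h1 : r / 2 ≤ rho ξ C := rho_ge hC.2.1.isBounded hr hball hξ
    have h2 : rho ξ C ≤ rho ξ D := rho_mono hCD hD.2.1.isBounded hξ
    have h3 : rho ξ D ≤ R' := rho_le hDsub hξ hR'pos
    have hlog1 : Real.log (r / 2) ≤ Real.log (rho ξ C) :=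
      Real.log_le_log (by linarith) h1
    have hlog2 : Real.log (rho ξ C) ≤ Real.log (rho ξ D) :=
      Real.log_le_log (by linarith) h2
    have hlog3 : Real.log (rho ξ D) ≤ Real.log R' :=
      Real.log_le_log (by linarith) h3
    rw [abs_of_nonpos (by linarith)]
    linarith
  -- Step 1 : γ • D ⊆ C
  have hγD : γ • D ⊆ C := by
    rintro _ ⟨x, hxD, rfl⟩
    show γ • x ∈ C
    by_cases hx0 : x = 0
    · rw [hx0, smul_zero]; exact interior_subset hC.2.2
    have hxn : (0:ℝ) < ‖x‖ := norm_pos_iff.mpr hx0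
    set ξ0 : Euc n := ‖x‖⁻¹ • x with hξ0def
    have hξ0 : ‖ξ0‖ = 1 := by
      rw [hξ0def, norm_smul, Real.norm_eq_abs, abs_of_pos (inv_pos.mpr hxn),
        inv_mul_cancel₀ hxn.ne']
    have hxmem : ‖x‖ ∈ {μ : ℝ | 0 < μ ∧ μ • ξ0 ∈ D} := by
      refine ⟨hxn, ?_⟩
      rw [hξ0def, smul_smul, mul_inv_cancel₀ hxn.ne', one_smul]
      exact hxD
    have h1 : ‖x‖ ≤ rho ξ0 D := le_csSup (bddAboveT hD.2.1.isBounded hξ0) hxmem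
    have h2 : |Real.log (rho ξ0 C) - Real.log (rho ξ0 D)| ≤ d := by
      have := le_ciSup hbddf (⟨ξ0, mem_sphere_zero_iff_norm.mpr hξ0⟩ : sphere (0 : Euc n) 1)
      exact this
    have hrC := rho_pos hC hξ0
    have hrD := rho_pos hD hξ0
    have h3 : Real.log (rho ξ0 D) - Real.log (rho ξ0 C) ≤ d := by
      have := (abs_le.mp h2).1; linarith
    have h4 : γ * ‖x‖ ≤ rho ξ0 C := by
      have hlogle : Real.log (γ * ‖x‖) ≤ Real.log (rho ξ0 C) := by
        rw [Real.log_mul hγ0.ne' hxn.ne', hγ, Real.log_exp]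
        have : Real.log ‖x‖ ≤ Real.log (rho ξ0 D) := Real.log_le_log hxn h1
        linarith
      exact (Real.log_le_log_iff (by positivity) hrC).mp hlogle
    have hmem : (γ * ‖x‖) • ξ0 ∈ C :=
      smul_mem_of_le_rho hC hξ0 (by positivity) h4
    have : (γ * ‖x‖) • ξ0 = γ • x := by
      rw [hξ0def, smul_smul, mul_assoc, mul_inv_cancel₀ hxn.ne', mul_one]
    rwa [this] at hmem
  -- Step 2 : inclusions
  have hQCD : Qiter A B X U lam C k ⊆ Qiter A B X U lam D k := Qiter_mono hCD k
  have hγQ : γ • Qiter A B X U lam D k ⊆ Qiter A B X U lam C k :=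
    Qiter_scale hX.1 (interior_subset hX.2.2) hU.1 (interior_subset hU.2.2)
      hγ0.le hγ1 hγD k
  have hbQD : Bornology.IsBounded (Qiter A B X U lam D k) :=
    (hX.2.1.isBounded.union hD.2.1.isBounded).subset (Qiter_subset D k)
  have hbQC : Bornology.IsBounded (Qiter A B X U lam C k) :=
    hbQD.subset hQCD
  -- Step 3
  refine Real.iSup_le (fun ξ => ?_) hd0
  have hξ : ‖(ξ : Euc n)‖ = 1 := mem_sphere_zero_iff_norm.mp ξ.2
  set a := rho (ξ : Euc n) (Qiter A B X U lam C k) with ha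
  set b := rho (ξ : Euc n) (Qiter A B X U lam D k) with hb
  show |Real.log a - Real.log b| ≤ d
  have hab : a ≤ b := rho_mono hQCD hbQD hξ
  have ha0 : 0 ≤ a := rho_nonneg _ _
  have hγb : γ * b ≤ a := by
    rcases Set.eq_empty_or_nonempty
        {μ : ℝ | 0 < μ ∧ μ • (ξ : Euc n) ∈ Qiter A B X U lam D k} with he | hne
    · rw [hb, rho, he, Real.sSup_empty, mul_zero]; exact ha0
    · have hble : b ≤ a / γ := by
        refine csSup_le hne (fun μ hμ => ?_)
        have hmem : γ * μ ∈ {μ : ℝ | 0 < μ ∧ μ • (ξ : Euc n) ∈ Qiter A B X U lam C k} := by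
          refine ⟨mul_pos hγ0 hμ.1, ?_⟩
          rw [mul_smul]
          exact hγQ (smul_mem_smul_set hμ.2)
        have := le_csSup (bddAboveT hbQC hξ) hmem
        rw [le_div_iff₀ hγ0, mul_comm]
        exact this
      calc γ * b ≤ γ * (a / γ) := by nlinarith
        _ = a := by field_simp
  rcases eq_or_lt_of_le (rho_nonneg (ξ : Euc n) (Qiter A B X U lam D k)) with hb0 | hb0
  · have hA0 : a = 0 := le_antisymm (hab.trans hb0.symm.le) ha0
    rw [hA0, hb, ← hb0]
    simpa using hd0
  · have hapos : 0 < a := lt_of_lt_of_le (mul_pos hγ0 hb0) hγb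
    have hlogab : Real.log a ≤ Real.log b := Real.log_le_log hapos hab
    have hlogb : Real.log b - Real.log a ≤ d := by
      have : Real.log (γ * b) ≤ Real.log a := Real.log_le_log (mul_pos hγ0 hb0) hγb
      rw [Real.log_mul hγ0.ne' hb0.ne', hγ, Real.log_exp] at this
      linarith
    rw [abs_of_nonpos (by linarith)]
    linarith
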